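/- arXiv:1606.08418 — 2 statements merged into one kernel-verified Lean document; each statement's English description precedes it below -/
import Mathlib

section
/- Let n ≥ 3 and let S ⊂ ℝⁿ be a compact embedded smooth submanifold of dimension m with n − m ≥ 3, and fix x_∞ ∈ S and β₁, β₂ > 0. Let x_k ∈ S with x_k → x_∞, let a_k > 0 with a_k → 0, and let ε_k > 0 with ε_k/a_k → 0. Then sup { ε_k^{n−m−2} ∫_S ‖x_k + a_k ζ − y‖^{−(n−2)} dH^m(y) : ζ ∈ ℝⁿ, ‖ζ‖ ≤ β₁, dist(ζ, T_{x_∞}S) ≥ β₂ } → 0 as k → ∞. In other words, after rescaling around x_k at scale a_k much larger than ε_k, the conformal factors u_{ε_k} converge uniformly to 1 on compact sets avoiding the tangent plane T_{x_∞}S. -/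
open MeasureTheory Metric Filter Topology Manifold ENNReal NNReal


set_option maxHeartbeats 1000000 in
lemma hausdorff_closedBall_le (m : ℕ) : ∃ Cm : ℝ≥0∞, Cm ≠ ∞ ∧
    ∀ (z : EuclideanSpace ℝ (Fin m)) (s : ℝ), 0 ≤ s →
      μH[(m:ℝ)] (Metric.closedBall z s) ≤ Cm * ENNReal.ofReal (s ^ m) := by
  set e := WithLp.equiv 2 (Fin m → ℝ) with he
  have hanti := PiLp.antilipschitzWith_ofLp 2 (fun _ : Fin m => ℝ)
  obtain ⟨K, hlipsymm⟩ : ∃ K : ℝ≥0, LipschitzWith K e.symm := by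
    refine ⟨(Fintype.card (Fin m) : NNReal) ^ ((1:ℝ≥0∞) / 2).toReal, LipschitzWith.of_dist_le_mul fun x y => ?_⟩
    have := hanti.le_mul_dist (e.symm x) (e.symm y)
    simpa [he] using this
  refine ⟨(K : ℝ≥0∞) ^ (m:ℝ) * ENNReal.ofReal (2 ^ m), ?_, ?_⟩
  · exact ENNReal.mul_ne_top (ENNReal.rpow_ne_top_of_nonneg (by positivity) ENNReal.coe_ne_top)
      ENNReal.ofReal_ne_top
  intro z s hs
  have h1 : Metric.closedBall z s = e.symm '' (e '' Metric.closedBall z s) := by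
    simp [Set.image_image]
  have h2 : μH[(m:ℝ)] (Metric.closedBall z s)
      ≤ (K : ℝ≥0∞) ^ (m:ℝ) * μH[(m:ℝ)] (e '' Metric.closedBall z s) := by
    conv_lhs => rw [h1]
    exact hlipsymm.hausdorffMeasure_image_le (by positivity) _
  have h3 : e '' Metric.closedBall z s ⊆ Metric.closedBall (e z) s := by
    rintro - ⟨w, hw, rfl⟩
    have := (PiLp.lipschitzWith_ofLp 2 (fun _ : Fin m => ℝ)).dist_le_mul w z
    simp only [NNReal.coe_one, one_mul] at this
    exact Metric.mem_closedBall.2 (le_trans this hw)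
  have h4 : (μH[(m:ℝ)] : Measure (Fin m → ℝ)) = volume := by
    have := MeasureTheory.hausdorffMeasure_pi_real (ι := Fin m)
    simpa using this
  have h5 : μH[(m:ℝ)] (e '' Metric.closedBall z s) ≤ ENNReal.ofReal ((2*s) ^ m) := by
    calc μH[(m:ℝ)] (e '' Metric.closedBall z s) ≤ μH[(m:ℝ)] (Metric.closedBall (e z) s) :=
        measure_mono h3
      _ = volume (Metric.closedBall (e z) s) := by rw [h4]
      _ = ENNReal.ofReal ((2*s) ^ Fintype.card (Fin m)) := Real.volume_pi_closedBall _ hs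
      _ = ENNReal.ofReal ((2*s) ^ m) := by rw [Fintype.card_fin]
  calc μH[(m:ℝ)] (Metric.closedBall z s) ≤ _ * μH[(m:ℝ)] (e '' Metric.closedBall z s) := h2
    _ ≤ (K : ℝ≥0∞) ^ (m:ℝ) * ENNReal.ofReal ((2*s) ^ m) := by gcongr
    _ = _ := by rw [mul_pow, ENNReal.ofReal_mul (by positivity), mul_assoc]

set_option maxHeartbeats 2000000 in
lemma patch_lemma
    (n m : ℕ)
    (M : Type) [TopologicalSpace M] [ChartedSpace (EuclideanSpace ℝ (Fin m)) M]
    [IsManifold (𝓡 m) (⊤ : ℕ∞) M]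
    (f : M → EuclideanSpace ℝ (Fin n))
    (hf_smooth : ContMDiff (𝓡 m) 𝓘(ℝ, EuclideanSpace ℝ (Fin n)) (⊤ : ℕ∞) f)
    (hf_imm : ∀ p : M,
      Function.Injective (mfderiv (𝓡 m) 𝓘(ℝ, EuclideanSpace ℝ (Fin n)) f p))
    (p : M) (η : ℝ) (hη : 0 < η) :
    ∃ (U : Set M) (C : ℝ≥0∞), IsOpen U ∧ p ∈ U ∧ C ≠ ∞ ∧
      Bornology.IsBounded (f '' U) ∧
      (∀ (q : EuclideanSpace ℝ (Fin n)) (r : ℝ), 0 < r →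
        μH[(m:ℝ)] (f '' U ∩ Metric.closedBall q r) ≤ C * ENNReal.ofReal (r ^ m)) ∧
      (∀ y₁ ∈ f '' U, ∀ y₂ ∈ f '' U, ∃ v : EuclideanSpace ℝ (Fin n),
        (∃ w, mfderiv (𝓡 m) 𝓘(ℝ, EuclideanSpace ℝ (Fin n)) f p w = v) ∧
        ‖y₁ - y₂ - v‖ ≤ η * ‖y₁ - y₂‖) := by
  obtain ⟨Cm, hCm_top, hCm⟩ := hausdorff_closedBall_le m
  set c₀ := extChartAt (𝓡 m) p with hc₀
  set z₀ := c₀ p with hz₀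
  set F : EuclideanSpace ℝ (Fin m) → EuclideanSpace ℝ (Fin n) := f ∘ c₀.symm with hF
  have htarget_open : IsOpen c₀.target := isOpen_extChartAt_target p
  have hz₀t : z₀ ∈ c₀.target := (extChartAt (𝓡 m) p).map_source (mem_extChartAt_source p)
  -- smoothness in chart
  have hone : (1 : WithTop ℕ∞) ≤ ((⊤:ℕ∞) : WithTop ℕ∞) := by exact_mod_cast le_top
  have hFd : ContDiffOn ℝ ((⊤:ℕ∞) : WithTop ℕ∞) F c₀.target := by
    have h := (contMDiff_iff.mp hf_smooth).2 p (f p)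
    simpa [extChartAt_model_space_eq_id, chartAt_self_eq, hF, hc₀, extChartAt_coe_symm, extChartAt_target,
      Function.comp] using h
  -- identification of the derivative
  have hmd : MDifferentiableAt (𝓡 m) 𝓘(ℝ, EuclideanSpace ℝ (Fin n)) f p :=
    hf_smooth.mdifferentiableAt (by simp)
  set D := fderiv ℝ F z₀ with hD
  have hmf : mfderiv (𝓡 m) 𝓘(ℝ, EuclideanSpace ℝ (Fin n)) f p = D := by
    rw [hmd.mfderiv]
    have hw : writtenInExtChartAt (𝓡 m) 𝓘(ℝ, EuclideanSpace ℝ (Fin n)) p f = F := by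
      funext z
      simp [writtenInExtChartAt, extChartAt_model_space_eq_id, chartAt_self_eq, hF, hc₀]
    rw [hw, ModelWithCorners.range_eq_univ, fderivWithin_univ]
  have hD_inj : Function.Injective D := by rw [← hmf]; exact hf_imm p
  obtain ⟨cK, hcK0, hcanti⟩ := LinearMap.exists_antilipschitzWith (D : EuclideanSpace ℝ (Fin m) →ₗ[ℝ] EuclideanSpace ℝ (Fin n))
    (LinearMap.ker_eq_bot (f := (D : EuclideanSpace ℝ (Fin m) →ₗ[ℝ] EuclideanSpace ℝ (Fin n))).mpr hD_inj)
  set C1 : ℝ := (cK : ℝ) with hC1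
  have hC1pos : 0 < C1 := hcK0
  set σ : ℝ := min (1 / (2 * C1)) (η / (2 * C1)) with hσdef
  have hσpos : 0 < σ := lt_min (by positivity) (by positivity)
  have hmin1 : σ ≤ 1 / (2 * C1) := min_le_left _ _
  have hmin2 : σ ≤ η / (2 * C1) := min_le_right _ _
  have hσ1 : C1 * σ ≤ 1 / 2 := by
    have h := mul_le_mul_of_nonneg_left hmin1 hC1pos.le
    have h2 : C1 * (1 / (2 * C1)) = 1 / 2 := by field_simp
    linarith
  have hσ2 : 2 * C1 * σ ≤ η := by
    have h := mul_le_mul_of_nonneg_left hmin2 (by positivity : (0:ℝ) ≤ 2 * C1)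
    have h2 : 2 * C1 * (η / (2 * C1)) = η := by field_simp
    linarith
  -- continuity of the derivative
  have hcontfd : ContinuousOn (fderiv ℝ F) c₀.target :=
    hFd.continuousOn_fderiv_of_isOpen htarget_open hone
  have hWopen : IsOpen (c₀.target ∩ (fun z => ‖fderiv ℝ F z - D‖) ⁻¹' Set.Iio σ) := by
    apply ContinuousOn.isOpen_inter_preimage _ htarget_open isOpen_Iio
    exact (hcontfd.sub continuousOn_const).norm
  have hz₀W : z₀ ∈ c₀.target ∩ (fun z => ‖fderiv ℝ F z - D‖) ⁻¹' Set.Iio σ := by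
    refine ⟨hz₀t, ?_⟩
    simp [← hD, hσpos]
  obtain ⟨r₁, hr₁pos, hball⟩ := Metric.nhds_basis_closedBall.mem_iff.mp
    (hWopen.mem_nhds hz₀W)
  set K := Metric.closedBall z₀ r₁ with hK
  have hKsub : K ⊆ c₀.target := fun z hz => (hball hz).1
  have hKbound : ∀ z ∈ K, ‖fderiv ℝ F z - D‖ ≤ σ := fun z hz => le_of_lt (hball hz).2
  -- mean value estimate
  have hmvt : ∀ z ∈ K, ∀ w ∈ K, ‖F z - F w - D (z - w)‖ ≤ σ * ‖z - w‖ := by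
    intro z hz w hw
    have hder : ∀ u ∈ K, HasFDerivWithinAt (fun v => F v - D v) (fderiv ℝ F u - D) K u := by
      intro u hu
      have hdiff : DifferentiableAt ℝ F u := by
        have := hFd.contDiffAt (htarget_open.mem_nhds (hKsub hu))
        exact this.differentiableAt (by simp)
      exact ((hdiff.hasFDerivAt.sub D.hasFDerivAt)).hasFDerivWithinAt
    have h := (convex_closedBall z₀ r₁).norm_image_sub_le_of_norm_hasFDerivWithin_le
      hder (fun u hu => hKbound u hu) hw hz
    calc ‖F z - F w - D (z - w)‖ = ‖F z - D z - (F w - D w)‖ := by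
          rw [map_sub]; congr 1; abel
      _ ≤ σ * ‖z - w‖ := h
  -- upper Lipschitz bound
  set L : ℝ := ‖D‖ + σ with hL
  have hLpos : 0 < L := by positivity
  have hlip : ∀ z ∈ K, ∀ w ∈ K, ‖F z - F w‖ ≤ L * ‖z - w‖ := by
    intro z hz w hw
    have h1 := hmvt z hz w hw
    have h2 : ‖D (z - w)‖ ≤ ‖D‖ * ‖z - w‖ := D.le_opNorm _
    have h3 : ‖F z - F w‖ ≤ ‖F z - F w - D (z - w)‖ + ‖D (z - w)‖ := by
      have h4 := norm_add_le (F z - F w - D (z - w)) (D (z - w))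
      have h5 : F z - F w - D (z - w) + D (z - w) = F z - F w := by abel
      rw [h5] at h4; exact h4
    rw [hL]; nlinarith
  -- lower Lipschitz bound
  have hlow : ∀ z ∈ K, ∀ w ∈ K, ‖z - w‖ ≤ 2 * C1 * ‖F z - F w‖ := by
    intro z hz w hw
    have h1 : ‖z - w‖ ≤ C1 * ‖D (z - w)‖ := by
      have h := hcanti.le_mul_dist z w
      simpa [dist_eq_norm, map_sub, ContinuousLinearMap.coe_coe] using h
    have h3 := hmvt z hz w hw
    have h4 : ‖D (z - w)‖ ≤ ‖F z - F w‖ + ‖F z - F w - D (z - w)‖ := by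
      have h := norm_sub_le (F z - F w) (F z - F w - D (z - w))
      calc ‖D (z - w)‖ = ‖F z - F w - (F z - F w - D (z - w))‖ := by congr 1; abel
        _ ≤ _ := h
    nlinarith [norm_nonneg (z - w), norm_nonneg (F z - F w)]
  -- the open neighbourhood U
  set U : Set M := c₀.source ∩ c₀ ⁻¹' (Metric.ball z₀ r₁) with hU
  have hUopen : IsOpen U := (continuousOn_extChartAt p).isOpen_inter_preimage
    (isOpen_extChartAt_source p) Metric.isOpen_ball
  have hpU : p ∈ U := ⟨mem_extChartAt_source p, by simpa [hz₀] using hr₁pos⟩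
  have himg : ∀ y ∈ f '' U, ∃ z ∈ K, F z = y := by
    rintro y ⟨q, ⟨hq1, hq2⟩, rfl⟩
    refine ⟨c₀ q, Metric.ball_subset_closedBall hq2, ?_⟩
    simp only [hF, Function.comp_apply]
    rw [c₀.left_inv hq1]
  -- boundedness
  have hbd : Bornology.IsBounded (f '' U) := by
    apply (Metric.isBounded_closedBall (x := F z₀) (r := L * r₁)).subset
    intro y hy
    obtain ⟨z, hz, rfl⟩ := himg y hy
    have := hlip z hz z₀ (Metric.mem_closedBall_self hr₁pos.le)
    have hzr : ‖z - z₀‖ ≤ r₁ := by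
      simpa [hK, dist_eq_norm] using hz
    have : ‖F z - F z₀‖ ≤ L * r₁ := le_trans this (by nlinarith)
    simpa [Metric.mem_closedBall, dist_eq_norm] using this
  -- Lipschitz on K as LipschitzOnWith
  have hlipOn : LipschitzOnWith (‖D‖₊ + σ.toNNReal) F K := by
    rw [lipschitzOnWith_iff_dist_le_mul]
    intro z hz w hw
    have := hlip z hz w hw
    rw [dist_eq_norm, dist_eq_norm]
    refine le_trans this (mul_le_mul_of_nonneg_right ?_ (norm_nonneg _))
    simp [hL, Real.coe_toNNReal σ hσpos.le]
  -- Ahlfors upper bound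
  set C : ℝ≥0∞ := ((‖D‖₊ + σ.toNNReal : ℝ≥0) : ℝ≥0∞) ^ (m:ℝ) * Cm *
    ENNReal.ofReal ((4 * C1) ^ m) with hCdef
  have hC_top : C ≠ ∞ := by
    refine ENNReal.mul_ne_top (ENNReal.mul_ne_top ?_ hCm_top) ENNReal.ofReal_ne_top
    exact ENNReal.rpow_ne_top_of_nonneg (by positivity) ENNReal.coe_ne_top
  have hAhlfors : ∀ (q : EuclideanSpace ℝ (Fin n)) (r : ℝ), 0 < r →
      μH[(m:ℝ)] (f '' U ∩ Metric.closedBall q r) ≤ C * ENNReal.ofReal (r ^ m) := by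
    intro q r hr
    by_cases hne : (f '' U ∩ Metric.closedBall q r).Nonempty
    · obtain ⟨y₁, hy₁U, hy₁B⟩ := hne
      obtain ⟨z₁, hz₁K, hz₁⟩ := himg y₁ hy₁U
      have hsub : f '' U ∩ Metric.closedBall q r ⊆
          F '' (K ∩ Metric.closedBall z₁ (2 * C1 * (2 * r))) := by
        rintro y ⟨hyU, hyB⟩
        obtain ⟨z, hzK, rfl⟩ := himg y hyU
        refine ⟨z, ⟨hzK, ?_⟩, rfl⟩
        have h1 := hlow z hzK z₁ hz₁K
        have h2 : ‖F z - F z₁‖ ≤ 2 * r := by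
          rw [← hz₁] at hy₁B
          have := dist_triangle (F z) q (F z₁)
          rw [Metric.mem_closedBall] at hyB hy₁B
          rw [dist_eq_norm] at *
          calc ‖F z - F z₁‖ ≤ ‖F z - q‖ + ‖q - F z₁‖ := norm_sub_le_norm_sub_add_norm_sub _ _ _
            _ ≤ r + r := by
                refine add_le_add hyB ?_
                rwa [norm_sub_rev]
            _ = 2 * r := by ring
        rw [Metric.mem_closedBall, dist_eq_norm]
        calc ‖z - z₁‖ ≤ 2 * C1 * ‖F z - F z₁‖ := h1
          _ ≤ 2 * C1 * (2 * r) := by nlinarith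
      calc μH[(m:ℝ)] (f '' U ∩ Metric.closedBall q r)
          ≤ μH[(m:ℝ)] (F '' (K ∩ Metric.closedBall z₁ (2 * C1 * (2 * r)))) :=
            measure_mono hsub
        _ ≤ ((‖D‖₊ + σ.toNNReal : ℝ≥0) : ℝ≥0∞) ^ (m:ℝ) *
            μH[(m:ℝ)] (K ∩ Metric.closedBall z₁ (2 * C1 * (2 * r))) :=
            (hlipOn.mono Set.inter_subset_left).hausdorffMeasure_image_le (by positivity)
        _ ≤ ((‖D‖₊ + σ.toNNReal : ℝ≥0) : ℝ≥0∞) ^ (m:ℝ) *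
            (Cm * ENNReal.ofReal ((2 * C1 * (2 * r)) ^ m)) := by
            gcongr
            exact le_trans (measure_mono Set.inter_subset_right)
              (hCm z₁ _ (by positivity))
        _ = C * ENNReal.ofReal (r ^ m) := by
            have he : (2 * C1 * (2 * r)) ^ m = (4 * C1) ^ m * r ^ m := by
              rw [← mul_pow]; congr 1; ring
            rw [hCdef, he, ENNReal.ofReal_mul (by positivity)]
            ring
    · rw [Set.not_nonempty_iff_eq_empty] at hne
      rw [hne]
      simp
  -- tangency
  refine ⟨U, C, hUopen, hpU, hC_top, hbd, hAhlfors, ?_⟩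
  intro y₁ hy₁ y₂ hy₂
  obtain ⟨z₁, hz₁K, rfl⟩ := himg y₁ hy₁
  obtain ⟨z₂, hz₂K, rfl⟩ := himg y₂ hy₂
  refine ⟨D (z₁ - z₂), ⟨z₁ - z₂, by rw [hmf]; rfl⟩, ?_⟩
  have h1 := hmvt z₁ hz₁K z₂ hz₂K
  have h2 := hlow z₁ hz₁K z₂ hz₂K
  calc ‖F z₁ - F z₂ - D (z₁ - z₂)‖ ≤ σ * ‖z₁ - z₂‖ := h1
    _ ≤ σ * (2 * C1 * ‖F z₁ - F z₂‖) := by nlinarith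
    _ ≤ η * ‖F z₁ - F z₂‖ := by nlinarith [norm_nonneg (F z₁ - F z₂)]

lemma measure_patch_ne_top {n m : ℕ}
    {M : Type} [TopologicalSpace M] [ChartedSpace (EuclideanSpace ℝ (Fin m)) M]
    [IsManifold (𝓡 m) (⊤ : ℕ∞) M]
    {f : M → EuclideanSpace ℝ (Fin n)} {U : Set M} {C : ℝ≥0∞} (hC : C ≠ ∞)
    (hbd : Bornology.IsBounded (f '' U))
    (hAhl : ∀ (q : EuclideanSpace ℝ (Fin n)) (r : ℝ), 0 < r →
      μH[(m:ℝ)] (f '' U ∩ Metric.closedBall q r) ≤ C * ENNReal.ofReal (r ^ m)) :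
    μH[(m:ℝ)] (f '' U) ≠ ∞ := by
  by_cases hne : (f '' U).Nonempty
  · obtain ⟨c, hc⟩ := hne
    obtain ⟨R, hR⟩ := hbd.subset_closedBall c
    have h1 : f '' U ∩ Metric.closedBall c (max R 1) = f '' U := by
      apply Set.inter_eq_self_of_subset_left
      exact hR.trans (Metric.closedBall_subset_closedBall (le_max_left _ _))
    have h2 := hAhl c (max R 1) (lt_of_lt_of_le one_pos (le_max_right _ _))
    rw [h1] at h2
    exact ne_top_of_le_ne_top (ENNReal.mul_ne_top hC ENNReal.ofReal_ne_top) h2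
  · rw [Set.not_nonempty_iff_eq_empty] at hne
    simp [hne]

lemma hausdorff_range_ne_top
    (n m : ℕ)
    (M : Type) [TopologicalSpace M] [ChartedSpace (EuclideanSpace ℝ (Fin m)) M]
    [IsManifold (𝓡 m) (⊤ : ℕ∞) M] [CompactSpace M]
    (f : M → EuclideanSpace ℝ (Fin n))
    (hf_smooth : ContMDiff (𝓡 m) 𝓘(ℝ, EuclideanSpace ℝ (Fin n)) (⊤ : ℕ∞) f)
    (hf_imm : ∀ p : M,
      Function.Injective (mfderiv (𝓡 m) 𝓘(ℝ, EuclideanSpace ℝ (Fin n)) f p)) :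
    μH[(m:ℝ)] (Set.range f) ≠ ∞ := by
  have h := fun p : M => patch_lemma n m M f hf_smooth hf_imm p 1 one_pos
  choose U C hUopen hpU hCtop hbd hAhl _ using h
  obtain ⟨t, ht⟩ := isCompact_univ.elim_finite_subcover U hUopen
    (fun q _ => Set.mem_iUnion.mpr ⟨q, hpU q⟩)
  have hcover : Set.range f ⊆ ⋃ p ∈ t, f '' U p := by
    rintro - ⟨q, rfl⟩
    obtain ⟨p, hp1, hp2⟩ := Set.mem_iUnion₂.mp (ht (Set.mem_univ q))
    exact Set.mem_biUnion hp1 ⟨q, hp2, rfl⟩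
  refine ne_top_of_le_ne_top ?_ (measure_mono hcover)
  refine ne_top_of_le_ne_top ?_ (measure_biUnion_finset_le t fun p => f '' U p)
  exact (ENNReal.sum_lt_top.mpr fun p _ =>
    (measure_patch_ne_top (hCtop p) (hbd p) (hAhl p)).lt_top).ne

set_option maxHeartbeats 4000000 in
/-- After rescaling around `x_k ∈ S` at a scale `a_k` much larger than `ε_k`, the
conformal factors converge uniformly to 1 on compact sets avoiding the tangent
plane (used in the second case of Proposition "outer-barriers"). -/
theorem rescaled_conformal_factor_tendsto_one
    (n m : ℕ) (hn : 3 ≤ n)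
    (M : Type) [TopologicalSpace M] [ChartedSpace (EuclideanSpace ℝ (Fin m)) M]
    [IsManifold (𝓡 m) (⊤ : ℕ∞) M] [CompactSpace M]
    (f : M → EuclideanSpace ℝ (Fin n))
    (hf_smooth : ContMDiff (𝓡 m) 𝓘(ℝ, EuclideanSpace ℝ (Fin n)) (⊤ : ℕ∞) f)
    (hf_emb : Topology.IsEmbedding f)
    (hf_imm : ∀ p : M,
      Function.Injective (mfderiv (𝓡 m) 𝓘(ℝ, EuclideanSpace ℝ (Fin n)) f p))
    (S : Set (EuclideanSpace ℝ (Fin n))) (hS : S = Set.range f)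
    (hcodim : m + 3 ≤ n)
    (xinf : EuclideanSpace ℝ (Fin n)) (pinf : M) (hpinf : f pinf = xinf)
    (T : Submodule ℝ (EuclideanSpace ℝ (Fin n)))
    (hT : ∀ v : EuclideanSpace ℝ (Fin n), v ∈ T ↔
      ∃ w : EuclideanSpace ℝ (Fin m),
        mfderiv (𝓡 m) 𝓘(ℝ, EuclideanSpace ℝ (Fin n)) f pinf w = v)
    (x : ℕ → EuclideanSpace ℝ (Fin n)) (hx : ∀ k, x k ∈ S)
    (hxlim : Tendsto x atTop (𝓝 xinf))
    (a : ℕ → ℝ) (ha : ∀ k, 0 < a k) (halim : Tendsto a atTop (𝓝 (0:ℝ)))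
    (ε : ℕ → ℝ) (hε : ∀ k, 0 < ε k)
    (hratio : Tendsto (fun k => ε k / a k) atTop (𝓝 (0:ℝ)))
    (β₁ β₂ : ℝ) (hβ₁ : 0 < β₁) (hβ₂ : 0 < β₂) :
    ∀ δ : ℝ, 0 < δ → ∃ N : ℕ, ∀ k ≥ N,
      ∀ ζ : EuclideanSpace ℝ (Fin n), ‖ζ‖ ≤ β₁ →
        β₂ ≤ Metric.infDist ζ (T : Set (EuclideanSpace ℝ (Fin n))) →
        (ε k) ^ ((n:ℝ) - m - 2) *
            ∫ y in S, ‖x k + a k • ζ - y‖ ^ (-((n:ℝ) - 2)) ∂μH[(m:ℝ)] < δ := by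
  intro δ hδ
  have hfc : Continuous f := hf_emb.continuous
  -- natural-number exponents
  set N2 : ℕ := n - 2 with hN2def
  set e : ℕ := n - m - 2 with hedef
  have hN2e : N2 = m + e := by omega
  have he1 : 1 ≤ e := by omega
  have hN2cast : ((N2 : ℕ) : ℝ) = (n : ℝ) - 2 := by
    rw [hN2def, Nat.cast_sub (by omega)]; norm_num
  have hecast : ((e : ℕ) : ℝ) = (n : ℝ) - (m : ℝ) - 2 := by
    rw [hedef, Nat.cast_sub (by omega), Nat.cast_sub (by omega)]; norm_num
  -- the patch at `pinf`
  have hη : 0 < β₂ / (8 * β₁) := by positivity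
  obtain ⟨U, C, hUopen, hpinfU, hCtop, hbd, hAhl, htan⟩ :=
    patch_lemma n m M f hf_smooth hf_imm pinf (β₂ / (8 * β₁)) hη
  -- total measure
  have hΛtop : μH[(m:ℝ)] S ≠ ∞ := by
    rw [hS]; exact hausdorff_range_ne_top n m M f hf_smooth hf_imm
  set Λr : ℝ := (μH[(m:ℝ)] S).toReal with hΛrdef
  have hΛr0 : 0 ≤ Λr := ENNReal.toReal_nonneg
  have hΛle : μH[(m:ℝ)] S ≤ ENNReal.ofReal Λr := by
    rw [hΛrdef, ENNReal.ofReal_toReal hΛtop]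
  set Cr : ℝ := C.toReal with hCrdef
  have hCr0 : 0 ≤ Cr := ENNReal.toReal_nonneg
  have hCeq : C = ENNReal.ofReal Cr := by rw [hCrdef, ENNReal.ofReal_toReal hCtop]
  -- closedness of S
  have hSclosed : IsClosed S := by rw [hS]; exact (isCompact_range hfc).isClosed
  have hSmeas : MeasurableSet S := hSclosed.measurableSet
  -- choice of ρ
  have hKcl : IsClosed (f '' (Set.univ \ U)) :=
    ((isCompact_univ.diff hUopen).image hfc).isClosed
  have hxinf_not : xinf ∉ f '' (Set.univ \ U) := by
    rintro ⟨q, hq, hfq⟩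
    have hqp : q = pinf := hf_emb.injective (by rw [hfq, hpinf])
    rw [hqp] at hq
    exact hq.2 hpinfU
  obtain ⟨ρ, hρpos, hρsub⟩ := Metric.nhds_basis_closedBall.mem_iff.mp
    (hKcl.isOpen_compl.mem_nhds hxinf_not)
  have hSU : S ∩ Metric.closedBall xinf ρ ⊆ f '' U := by
    rintro y ⟨hyS, hyB⟩
    rw [hS] at hyS
    obtain ⟨q, rfl⟩ := hyS
    by_cases hqU : q ∈ U
    · exact ⟨q, hqU, rfl⟩
    · exact absurd ⟨q, ⟨Set.mem_univ q, hqU⟩, rfl⟩ (hρsub hyB)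
  -- constants
  set K1 : ℝ := ((ρ/2) ^ N2)⁻¹ * Λr with hK1def
  set K2 : ℝ := Cr * (4*β₁) ^ m * (((β₂/2) ^ N2)⁻¹) with hK2def
  set K3 : ℝ := 2 * (Cr * 4 ^ m * (((2*β₁) ^ e)⁻¹)) with hK3def
  set W : ℕ → ℝ := fun k => (ε k) ^ e * K1 + (ε k / a k) ^ e * (K2 + K3) with hWdef
  have hε0 : Tendsto ε atTop (𝓝 (0:ℝ)) := by
    have h := hratio.mul halim
    rw [zero_mul] at h
    convert h using 2 with k
    rw [div_mul_cancel₀ _ (ha k).ne']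
  have hW0 : Tendsto W atTop (𝓝 (0:ℝ)) := by
    have h1 := (hε0.pow e).mul_const K1
    have h2 := (hratio.pow e).mul_const (K2 + K3)
    have h := h1.add h2
    rw [zero_pow (by omega : e ≠ 0), zero_mul, zero_mul, add_zero] at h
    exact h
  obtain ⟨N, hN⟩ := Filter.eventually_atTop.mp
    (((hxlim.eventually (Metric.closedBall_mem_nhds xinf (by positivity : 0 < ρ/4))).and
      ((halim.eventually_lt_const (by positivity : 0 < ρ/(4*β₁))).and
        (hW0.eventually_lt_const hδ))))
  refine ⟨N, fun k hk ζ hζ1 hζ2 => ?_⟩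
  obtain ⟨hxk1, hak1, hWk⟩ := hN k hk
  have hak : 0 < a k := ha k
  have hεk : 0 < ε k := hε k
  have hxknorm : ‖x k - xinf‖ ≤ ρ/4 := by
    rw [← dist_eq_norm]; exact Metric.mem_closedBall.mp hxk1
  have hakβ : a k * β₁ ≤ ρ/4 := by
    have h1 : a k * β₁ < ρ/(4*β₁) * β₁ := by
      exact mul_lt_mul_of_pos_right hak1 hβ₁
    have h2 : ρ/(4*β₁) * β₁ = ρ/4 := by field_simp
    linarith
  set pt := x k + a k • ζ with hptdef
  set r0 : ℝ := 4*β₁*(a k) with hr0def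
  have hr0pos : 0 < r0 := by positivity
  set d1 : ℝ := a k * (β₂/2) with hd1def
  have hd1pos : 0 < d1 := by positivity
  have hxkU : x k ∈ f '' U := hSU ⟨hx k, by
    rw [Metric.mem_closedBall, dist_eq_norm]; linarith⟩
  -- distance lower bounds
  have haζ : a k * ‖ζ‖ ≤ ρ/4 := by
    have := mul_le_mul_of_nonneg_left hζ1 hak.le
    nlinarith
  have hfar : ∀ y, ρ < dist y xinf → ρ/2 ≤ ‖pt - y‖ := by
    intro y hy
    have h1 : ‖y - xinf‖ ≤ ‖y - pt‖ + ‖pt - xinf‖ := norm_sub_le_norm_sub_add_norm_sub _ _ _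
    have h2 : ‖pt - xinf‖ ≤ ‖x k - xinf‖ + a k * ‖ζ‖ := by
      have : pt - xinf = (x k - xinf) + a k • ζ := by rw [hptdef]; abel
      rw [this]
      refine le_trans (norm_add_le _ _) ?_
      rw [norm_smul, Real.norm_eq_abs, abs_of_pos hak]
    rw [dist_eq_norm] at hy
    rw [norm_sub_rev pt y]
    linarith
  have hmid : ∀ y, 2*β₁*(a k) ≤ ‖y - x k‖ → ‖y - x k‖/2 ≤ ‖pt - y‖ := by
    intro y hy
    have h1 : ‖y - x k‖ ≤ ‖y - pt‖ + ‖pt - x k‖ := norm_sub_le_norm_sub_add_norm_sub _ _ _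
    have h2 : ‖pt - x k‖ = a k * ‖ζ‖ := by
      have : pt - x k = a k • ζ := by rw [hptdef]; abel
      rw [this, norm_smul, Real.norm_eq_abs, abs_of_pos hak]
    have h3 : a k * ‖ζ‖ ≤ a k * β₁ := mul_le_mul_of_nonneg_left hζ1 hak.le
    rw [norm_sub_rev pt y]
    nlinarith
  -- scaling of infDist
  have hTclosed : IsClosed (T : Set (EuclideanSpace ℝ (Fin n))) :=
    Submodule.closed_of_finiteDimensional T
  have hlow1 : a k * β₂ ≤ Metric.infDist (a k • ζ) (T : Set (EuclideanSpace ℝ (Fin n))) := by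
    obtain ⟨tmin, htmem, htmin⟩ := hTclosed.exists_infDist_eq_dist
      ⟨0, T.zero_mem⟩ (a k • ζ)
    rw [htmin, dist_eq_norm]
    have heq : a k • ζ - tmin = a k • (ζ - (a k)⁻¹ • tmin) := by
      rw [smul_sub, smul_inv_smul₀ hak.ne']
    rw [heq, norm_smul, Real.norm_eq_abs, abs_of_pos hak]
    have h1 : Metric.infDist ζ (T : Set (EuclideanSpace ℝ (Fin n))) ≤ ‖ζ - (a k)⁻¹ • tmin‖ := by
      rw [← dist_eq_norm]
      exact Metric.infDist_le_dist_of_mem (T.smul_mem _ htmem)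
    have h2 : β₂ ≤ ‖ζ - (a k)⁻¹ • tmin‖ := le_trans hζ2 h1
    nlinarith
  have hcore : ∀ y ∈ f '' U, ‖y - x k‖ ≤ r0 → d1 ≤ ‖pt - y‖ := by
    intro y hyU hynear
    obtain ⟨v, hvT, hvb⟩ := htan y hyU (x k) hxkU
    have hvmem : v ∈ (T : Set (EuclideanSpace ℝ (Fin n))) := (hT v).mpr hvT
    have h1 : Metric.infDist (a k • ζ) (T : Set (EuclideanSpace ℝ (Fin n)))
        ≤ ‖a k • ζ - v‖ := by
      rw [← dist_eq_norm]; exact Metric.infDist_le_dist_of_mem hvmem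
    have h2 : ‖a k • ζ - v‖ ≤ ‖pt - y‖ + ‖y - x k - v‖ := by
      have heq : a k • ζ - v = (pt - y) + (y - x k - v) := by rw [hptdef]; abel
      rw [heq]; exact norm_add_le _ _
    have h3 : ‖y - x k - v‖ ≤ β₂ / (8*β₁) * ‖y - x k‖ := hvb
    have h4 : β₂ / (8*β₁) * ‖y - x k‖ ≤ β₂ / (8*β₁) * r0 := by
      exact mul_le_mul_of_nonneg_left hynear (le_of_lt hη)
    have h5 : β₂ / (8*β₁) * r0 = a k * β₂ / 2 := by
      rw [hr0def]; field_simp; ring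
    rw [hd1def]
    nlinarith
  -- the integrand
  set g : EuclideanSpace ℝ (Fin n) → ℝ := fun y => (‖pt - y‖ ^ N2)⁻¹ with hgdef
  have hgm : Measurable g :=
    (((continuous_const.sub continuous_id).norm.pow N2).measurable).inv
  have hg0 : ∀ y, 0 ≤ g y := fun y => by positivity
  have hinteq : ∫ y in S, ‖pt - y‖ ^ (-((n:ℝ) - 2)) ∂μH[(m:ℝ)]
      = (∫⁻ y in S, ENNReal.ofReal (g y) ∂μH[(m:ℝ)]).toReal := by
    have hptw : ∀ y : EuclideanSpace ℝ (Fin n), ‖pt - y‖ ^ (-((n:ℝ) - 2)) = g y := by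
      intro y
      rw [hgdef]
      rw [show -((n:ℝ) - 2) = -((N2:ℕ):ℝ) by rw [hN2cast]]
      rw [Real.rpow_neg (norm_nonneg _), Real.rpow_natCast]
    simp_rw [hptw]
    exact integral_eq_lintegral_of_nonneg_ae (Filter.Eventually.of_forall hg0)
      hgm.aestronglyMeasurable
  -- per-piece estimate
  have hpiece : ∀ (B : Set (EuclideanSpace ℝ (Fin n))), MeasurableSet B →
      ∀ d : ℝ, 0 < d → (∀ y ∈ B, d ≤ ‖pt - y‖) →
      ∫⁻ y in B, ENNReal.ofReal (g y) ∂μH[(m:ℝ)]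
        ≤ ENNReal.ofReal ((d ^ N2)⁻¹) * μH[(m:ℝ)] B := by
    intro B hB d hd hdist
    calc ∫⁻ y in B, ENNReal.ofReal (g y) ∂μH[(m:ℝ)]
        ≤ ∫⁻ _ in B, ENNReal.ofReal ((d ^ N2)⁻¹) ∂μH[(m:ℝ)] := by
          refine setLIntegral_mono' hB fun y hy => ENNReal.ofReal_le_ofReal ?_
          rw [hgdef]
          exact inv_anti₀ (pow_pos hd _) (pow_le_pow_left₀ hd.le (hdist y hy) N2)
      _ = ENNReal.ofReal ((d ^ N2)⁻¹) * μH[(m:ℝ)] B := setLIntegral_const _ _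
  -- decomposition
  set P0 : Set (EuclideanSpace ℝ (Fin n)) := S \ Metric.closedBall xinf ρ with hP0def
  set P1 : Set (EuclideanSpace ℝ (Fin n)) :=
    S ∩ Metric.closedBall xinf ρ ∩ Metric.closedBall (x k) r0 with hP1def
  set A : ℕ → Set (EuclideanSpace ℝ (Fin n)) := fun j =>
    S ∩ Metric.closedBall xinf ρ ∩
      (Metric.closedBall (x k) (r0*2^(j+1)) \ Metric.closedBall (x k) (r0*2^j)) with hAdef
  set B : ℕ → Set (EuclideanSpace ℝ (Fin n)) := fun i =>
    match i with
    | 0 => P0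
    | 1 => P1
    | (j+2) => A j
    with hBdef
  have hcov : S ⊆ ⋃ i, B i := by
    intro y hyS
    by_cases h0 : ρ < dist y xinf
    · exact Set.mem_iUnion.mpr ⟨0, ⟨hyS, fun hc => absurd (Metric.mem_closedBall.mp hc)
        (not_le.mpr h0)⟩⟩
    · push_neg at h0
      have hyB : y ∈ Metric.closedBall xinf ρ := Metric.mem_closedBall.mpr h0
      by_cases h1 : dist y (x k) ≤ r0
      · exact Set.mem_iUnion.mpr ⟨1, ⟨⟨hyS, hyB⟩, Metric.mem_closedBall.mpr h1⟩⟩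
      · push_neg at h1
        have hQex : ∃ j : ℕ, dist y (x k) ≤ r0 * 2^(j+1) := by
          obtain ⟨j, hj⟩ := pow_unbounded_of_one_lt (dist y (x k) / r0) (one_lt_two (α := ℝ))
          rw [div_lt_iff₀ hr0pos] at hj
          have h2 : (2:ℝ)^j ≤ 2^(j+1) := pow_le_pow_right₀ one_le_two (Nat.le_succ j)
          exact ⟨j, by nlinarith⟩
        obtain ⟨j₀, hle, hgt⟩ :
            ∃ j₀, dist y (x k) ≤ r0*2^(j₀+1) ∧ r0*2^j₀ < dist y (x k) := by
          refine ⟨Nat.find hQex, Nat.find_spec hQex, ?_⟩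
          rcases Nat.eq_zero_or_pos (Nat.find hQex) with h | h
          · rw [h]; simpa using h1
          · obtain ⟨j', hj'⟩ := Nat.exists_eq_succ_of_ne_zero h.ne'
            have hmin := Nat.find_min hQex (m := j') (by omega)
            push_neg at hmin
            rw [hj']
            exact hmin
        refine Set.mem_iUnion.mpr ⟨j₀+2, ⟨⟨hyS, hyB⟩,
          ⟨Metric.mem_closedBall.mpr hle, fun hc => absurd (Metric.mem_closedBall.mp hc)
            (not_le.mpr hgt)⟩⟩⟩
  -- measurability of pieces
  have hP0m : MeasurableSet P0 := hSmeas.diff Metric.isClosed_closedBall.measurableSet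
  have hP1m : MeasurableSet P1 :=
    (hSmeas.inter Metric.isClosed_closedBall.measurableSet).inter Metric.isClosed_closedBall.measurableSet
  have hAm : ∀ j, MeasurableSet (A j) := fun j =>
    (hSmeas.inter Metric.isClosed_closedBall.measurableSet).inter
      (Metric.isClosed_closedBall.measurableSet.diff Metric.isClosed_closedBall.measurableSet)
  -- piece estimates
  have hT0 : ∫⁻ y in P0, ENNReal.ofReal (g y) ∂μH[(m:ℝ)]
      ≤ ENNReal.ofReal (((ρ/2) ^ N2)⁻¹ * Λr) := by
    refine le_trans (hpiece P0 hP0m (ρ/2) (by positivity) ?_) ?_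
    · rintro y ⟨hyS, hyB⟩
      exact hfar y (not_le.mp (fun hc => hyB (Metric.mem_closedBall.mpr hc)))
    · rw [ENNReal.ofReal_mul (p := ((ρ/2) ^ N2)⁻¹) (by positivity)]
      exact mul_le_mul_right (le_trans (measure_mono Set.diff_subset) hΛle) _
  have hT1 : ∫⁻ y in P1, ENNReal.ofReal (g y) ∂μH[(m:ℝ)]
      ≤ ENNReal.ofReal ((d1 ^ N2)⁻¹ * (Cr * r0 ^ m)) := by
    refine le_trans (hpiece P1 hP1m d1 hd1pos ?_) ?_
    · rintro y ⟨⟨hyS, hyB⟩, hyB2⟩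
      refine hcore y (hSU ⟨hyS, hyB⟩) ?_
      rw [← dist_eq_norm]
      exact Metric.mem_closedBall.mp hyB2
    · have hμ : μH[(m:ℝ)] P1 ≤ C * ENNReal.ofReal (r0 ^ m) := by
        refine le_trans (measure_mono ?_) (hAhl (x k) r0 hr0pos)
        rintro y ⟨⟨hyS, hyB⟩, hyB2⟩
        exact ⟨hSU ⟨hyS, hyB⟩, hyB2⟩
      rw [ENNReal.ofReal_mul (p := (d1 ^ N2)⁻¹) (by positivity),
        ENNReal.ofReal_mul (p := Cr) hCr0, ← hCeq]
      exact mul_le_mul_right hμ _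
  have hTann : ∀ j, ∫⁻ y in A j, ENNReal.ofReal (g y) ∂μH[(m:ℝ)]
      ≤ ENNReal.ofReal (Cr * 4 ^ m * (((r0/2) ^ e)⁻¹) * (1/2) ^ j) := by
    intro j
    have hdj : (0:ℝ) < r0 * 2^j / 2 := by positivity
    have hstep1 : ∫⁻ y in A j, ENNReal.ofReal (g y) ∂μH[(m:ℝ)]
        ≤ ENNReal.ofReal (((r0 * 2^j / 2) ^ N2)⁻¹ * (Cr * (r0 * 2^(j+1)) ^ m)) := by
      refine le_trans (hpiece (A j) (hAm j) (r0 * 2^j / 2) hdj ?_) ?_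
      · rintro y ⟨⟨hyS, hyB⟩, ⟨hyB2, hyB3⟩⟩
        have hygt : r0 * 2^j < dist y (x k) := not_le.mp (fun hc =>
          hyB3 (Metric.mem_closedBall.mpr hc))
        rw [dist_eq_norm] at hygt
        have h2 : 2*β₁*(a k) ≤ ‖y - x k‖ := by
          have h2j : (1:ℝ) ≤ 2^j := one_le_pow₀ one_le_two
          rw [hr0def] at hygt
          nlinarith
        have := hmid y h2
        linarith
      · have hμ : μH[(m:ℝ)] (A j) ≤ C * ENNReal.ofReal ((r0 * 2^(j+1)) ^ m) := by
          refine le_trans (measure_mono ?_) (hAhl (x k) (r0 * 2^(j+1)) (by positivity))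
          rintro y ⟨⟨hyS, hyB⟩, ⟨hyB2, _⟩⟩
          exact ⟨hSU ⟨hyS, hyB⟩, hyB2⟩
        rw [ENNReal.ofReal_mul (p := ((r0 * 2^j / 2) ^ N2)⁻¹) (by positivity),
          ENNReal.ofReal_mul (p := Cr) hCr0, ← hCeq]
        exact mul_le_mul_right hμ _
    refine le_trans hstep1 (ENNReal.ofReal_le_ofReal ?_)
    -- real computation
    have hd2 : r0 * 2^(j+1) = 4 * (r0 * 2^j / 2) := by rw [pow_succ]; ring
    have hd3 : r0 * 2^j / 2 = (r0/2) * 2^j := by ring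
    have hdne : (r0 * 2^j / 2) ≠ 0 := hdj.ne'
    have hcancel : ((r0 * 2^j / 2) ^ N2)⁻¹ * (r0 * 2^(j+1)) ^ m
        = 4 ^ m * ((r0 * 2^j / 2) ^ e)⁻¹ := by
      have hsplit : ((r0*2^j/2):ℝ)^N2 = (r0*2^j/2)^m * (r0*2^j/2)^e := by
        rw [hN2e, pow_add]
      rw [hd2, mul_pow, hsplit, mul_inv]
      calc ((r0*2^j/2)^m)⁻¹ * ((r0*2^j/2)^e)⁻¹ * ((4:ℝ)^m * (r0*2^j/2)^m)
          = 4^m * ((r0*2^j/2)^e)⁻¹ * (((r0*2^j/2)^m)⁻¹ * (r0*2^j/2)^m) := by ring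
        _ = 4 ^ m * ((r0 * 2^j / 2) ^ e)⁻¹ := by
            rw [inv_mul_cancel₀ (pow_ne_zero _ hdne), mul_one]
    have hd4 : ((r0 * 2^j / 2) ^ e)⁻¹ ≤ ((r0/2) ^ e)⁻¹ * (1/2)^j := by
      rw [hd3, mul_pow, mul_inv]
      refine mul_le_mul_of_nonneg_left ?_ (by positivity)
      have h1 : ((2:ℝ)^j) ≤ ((2:ℝ)^j) ^ e := le_self_pow₀ (one_le_pow₀ one_le_two) (by omega)
      have h2 : ((2:ℝ)^j)⁻¹ = (1/2)^j := by
        rw [one_div, inv_pow]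
      rw [← h2]
      exact inv_anti₀ (by positivity) h1
    calc ((r0 * 2^j / 2) ^ N2)⁻¹ * (Cr * (r0 * 2^(j+1)) ^ m)
        = Cr * (((r0 * 2^j / 2) ^ N2)⁻¹ * (r0 * 2^(j+1)) ^ m) := by ring
      _ = Cr * (4 ^ m * ((r0 * 2^j / 2) ^ e)⁻¹) := by rw [hcancel]
      _ ≤ Cr * (4 ^ m * (((r0/2) ^ e)⁻¹ * (1/2)^j)) := by
          refine mul_le_mul_of_nonneg_left ?_ hCr0
          exact mul_le_mul_of_nonneg_left hd4 (by positivity)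
      _ = Cr * 4 ^ m * (((r0/2) ^ e)⁻¹) * (1/2) ^ j := by ring
  -- summation
  have hhalf : ENNReal.ofReal ((1:ℝ)/2) = 2⁻¹ := by
    rw [show (1:ℝ)/2 = (2:ℝ)⁻¹ by norm_num, ENNReal.ofReal_inv_of_pos two_pos,
      ENNReal.ofReal_ofNat]
  have htsum : ∑' j : ℕ, ENNReal.ofReal (Cr * 4 ^ m * (((r0/2) ^ e)⁻¹) * (1/2) ^ j)
      ≤ ENNReal.ofReal (Cr * 4 ^ m * (((r0/2) ^ e)⁻¹) * 2) := by
    have hterm : ∀ j : ℕ, ENNReal.ofReal (Cr * 4 ^ m * (((r0/2) ^ e)⁻¹) * (1/2) ^ j)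
        = ENNReal.ofReal (Cr * 4 ^ m * (((r0/2) ^ e)⁻¹)) * 2⁻¹ ^ j := by
      intro j
      rw [ENNReal.ofReal_mul (by positivity), ENNReal.ofReal_pow (by norm_num), hhalf]
    simp_rw [hterm]
    rw [ENNReal.tsum_mul_left, ENNReal.tsum_geometric, ENNReal.one_sub_inv_two, inv_inv,
      ENNReal.ofReal_mul (p := Cr * 4 ^ m * (((r0/2) ^ e)⁻¹)) (by positivity),
      ENNReal.ofReal_ofNat]
  set RB : ℝ := ((ρ/2) ^ N2)⁻¹ * Λr + (d1 ^ N2)⁻¹ * (Cr * r0 ^ m)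
      + Cr * 4 ^ m * (((r0/2) ^ e)⁻¹) * 2 with hRBdef
  have hRB0 : 0 ≤ RB := by positivity
  have htotal : ∫⁻ y in S, ENNReal.ofReal (g y) ∂μH[(m:ℝ)] ≤ ENNReal.ofReal RB := by
    calc ∫⁻ y in S, ENNReal.ofReal (g y) ∂μH[(m:ℝ)]
        ≤ ∫⁻ y in ⋃ i, B i, ENNReal.ofReal (g y) ∂μH[(m:ℝ)] := lintegral_mono_set hcov
      _ ≤ ∑' i, ∫⁻ y in B i, ENNReal.ofReal (g y) ∂μH[(m:ℝ)] := lintegral_iUnion_le _ _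
      _ = (∫⁻ y in P0, ENNReal.ofReal (g y) ∂μH[(m:ℝ)])
          + ((∫⁻ y in P1, ENNReal.ofReal (g y) ∂μH[(m:ℝ)])
          + ∑' j, ∫⁻ y in A j, ENNReal.ofReal (g y) ∂μH[(m:ℝ)]) := by
          rw [tsum_eq_zero_add' ENNReal.summable]
          congr 1
          rw [tsum_eq_zero_add' ENNReal.summable]
      _ ≤ ENNReal.ofReal (((ρ/2) ^ N2)⁻¹ * Λr)
          + (ENNReal.ofReal ((d1 ^ N2)⁻¹ * (Cr * r0 ^ m))
          + ENNReal.ofReal (Cr * 4 ^ m * (((r0/2) ^ e)⁻¹) * 2)) := by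
          refine add_le_add hT0 (add_le_add hT1 (le_trans (ENNReal.tsum_le_tsum hTann) htsum))
      _ = ENNReal.ofReal RB := by
          rw [hRBdef, ← ENNReal.ofReal_add (by positivity) (by positivity),
            ← ENNReal.ofReal_add (by positivity) (by positivity)]
          ring_nf
  have hintle : ∫ y in S, ‖pt - y‖ ^ (-((n:ℝ) - 2)) ∂μH[(m:ℝ)] ≤ RB := by
    rw [hinteq]
    exact ENNReal.toReal_le_of_le_ofReal hRB0 htotal
  have hint0 : 0 ≤ ∫ y in S, ‖pt - y‖ ^ (-((n:ℝ) - 2)) ∂μH[(m:ℝ)] := by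
    rw [hinteq]; exact ENNReal.toReal_nonneg
  -- final computation
  have hrpow : (ε k) ^ ((n:ℝ) - (m:ℝ) - 2) = (ε k) ^ (e:ℕ) := by
    rw [← hecast, Real.rpow_natCast]
  have hqe : (ε k / a k)^e = (ε k)^e * ((a k)^e)⁻¹ := by rw [div_pow, div_eq_mul_inv]
  have eqA : (ε k)^e * ((d1 ^ N2)⁻¹ * (Cr * r0 ^ m)) = (ε k / a k)^e * K2 := by
    have h1 : d1 ^ N2 = ((β₂/2) ^ N2) * ((a k) ^ m * (a k) ^ e) := by
      rw [hd1def, mul_pow, hN2e, pow_add]; ring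
    have h2 : r0 ^ m = (4*β₁) ^ m * (a k) ^ m := by rw [hr0def, mul_pow]
    rw [h1, h2, hqe, hK2def]
    field_simp
  have eqB : (ε k)^e * (Cr * 4 ^ m * (((r0/2) ^ e)⁻¹) * 2) = (ε k / a k)^e * K3 := by
    have h1 : (r0/2) ^ e = (2*β₁) ^ e * (a k) ^ e := by
      rw [show r0/2 = (2*β₁)*(a k) by rw [hr0def]; ring, mul_pow]
    rw [h1, hqe, hK3def]
    field_simp
  have hWeq : (ε k) ^ (e:ℕ) * RB = W k := by
    have hWk' : W k = (ε k)^e * K1 + (ε k / a k)^e * (K2 + K3) := rfl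
    rw [hWk', hRBdef, mul_add, mul_add, eqA, eqB, hK1def]
    ring
  calc (ε k) ^ ((n:ℝ) - (m:ℝ) - 2) * ∫ y in S, ‖pt - y‖ ^ (-((n:ℝ) - 2)) ∂μH[(m:ℝ)]
      ≤ (ε k) ^ ((n:ℝ) - (m:ℝ) - 2) * RB := by
        refine mul_le_mul_of_nonneg_left hintle ?_
        positivity
    _ = W k := by rw [hrpow]; exact hWeq
    _ < δ := hWk
end

section
/- Let n ≥ 3 and let S ⊂ ℝⁿ be a nonempty compact embedded smooth submanifold of dimension m with n − m ≥ 3. Then ∫_S ‖x − y‖^{−(n−2)} dH^m(y) → ∞ as dist(x, S) → 0 with x ∉ S; that is, for every M > 0 there exists d > 0 such that every x ∈ ℝⁿ \ S with dist(x, S) < d satisfies ∫_S ‖x − y‖^{−(n−2)} dH^m(y) > M. In particular, for each fixed ε > 0, the conformal factor u_ε(x) = 1 + ε^{n−m−2} ∫_S ‖x − y‖^{−(n−2)} dH^m(y) tends to infinity at S. -/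
set_option maxHeartbeats 1000000

open MeasureTheory Metric Filter Topology Manifold Set
open scoped ENNReal NNReal

lemma euclidean_hausdorff_ball_lower (m : ℕ) :
    ∃ c : ℝ, 0 < c ∧ ∀ (u : EuclideanSpace ℝ (Fin m)) (ρ : ℝ), 0 < ρ →
      ENNReal.ofReal (c * ρ ^ m) ≤ μH[(m : ℝ)] (Metric.ball u ρ) := by
  set C : ℝ := Real.sqrt m + 1 with hCdef
  have hC0 : 0 < C := by positivity
  refine ⟨(2 / C) ^ m, by positivity, fun u ρ hρ => ?_⟩
  set e := WithLp.equiv 2 (Fin m → ℝ) with he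
  have hanti : ∀ x y : EuclideanSpace ℝ (Fin m), dist x y ≤ C * dist (e x) (e y) := by
    intro x y
    have h := (PiLp.antilipschitzWith_ofLp 2 (fun _ : Fin m => ℝ)).le_mul_dist x y
    refine h.trans (mul_le_mul_of_nonneg_right ?_ dist_nonneg)
    show (((Fintype.card (Fin m) : ℝ≥0) ^ ((1:ℝ≥0∞) / 2).toReal : ℝ≥0) : ℝ) ≤ C
    have h2 : ((1:ℝ≥0∞) / 2).toReal = (1/2 : ℝ) := by simp
    rw [h2, NNReal.coe_rpow, NNReal.coe_natCast, Fintype.card_fin, hCdef]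
    rw [← Real.sqrt_eq_rpow]
    linarith
  have hsub : Metric.ball (e u) (ρ / C) ⊆ e '' Metric.ball u ρ := by
    intro z hz
    refine ⟨(WithLp.equiv 2 (Fin m → ℝ)).symm z, ?_, by simp [he]⟩
    rw [Metric.mem_ball] at hz ⊢
    calc dist ((WithLp.equiv 2 (Fin m → ℝ)).symm z) u
        ≤ C * dist (e ((WithLp.equiv 2 (Fin m → ℝ)).symm z)) (e u) := hanti _ _
      _ = C * dist z (e u) := by simp [he]
      _ < C * (ρ / C) := by gcongr
      _ = ρ := by field_simp
  have h1 : μH[(m:ℝ)] (Metric.ball (e u) (ρ / C)) ≤ μH[(m:ℝ)] (e '' Metric.ball u ρ) :=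
    measure_mono hsub
  have h2 : μH[(m:ℝ)] (e '' Metric.ball u ρ) ≤ μH[(m:ℝ)] (Metric.ball u ρ) := by
    have := (PiLp.lipschitzWith_ofLp 2 (fun _ : Fin m => ℝ)).hausdorffMeasure_image_le
      (by positivity : (0:ℝ) ≤ (m:ℝ)) (Metric.ball u ρ)
    simp at this; exact this
  have h3 : (μH[(m:ℝ)] : Measure (Fin m → ℝ)) = volume := by
    have := hausdorffMeasure_pi_real (ι := Fin m)
    simpa [Fintype.card_fin] using this
  have h4 : μH[(m:ℝ)] (Metric.ball (e u) (ρ / C)) = ENNReal.ofReal ((2 * (ρ / C)) ^ m) := by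
    rw [h3, Real.volume_pi_ball _ (by positivity), Fintype.card_fin]
  refine le_trans ?_ (h1.trans h2)
  rw [h4]
  apply ENNReal.ofReal_le_ofReal
  rw [div_pow, mul_pow, div_pow]
  ring_nf
  exact le_refl _

lemma euclidean_hausdorff_ball_finite (m : ℕ) (u : EuclideanSpace ℝ (Fin m)) (ρ : ℝ) :
    μH[(m : ℝ)] (Metric.ball u ρ) < ∞ := by
  rcases le_or_gt ρ 0 with hρ | hρ
  · simp [Metric.ball_eq_empty.2 hρ]
  set e := WithLp.equiv 2 (Fin m → ℝ) with he
  have hlipsymm : LipschitzWith ((Fintype.card (Fin m) : ℝ≥0) ^ ((1:ℝ≥0∞) / 2).toReal) e.symm := by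
    intro x y
    have h := (PiLp.antilipschitzWith_ofLp 2 (fun _ : Fin m => ℝ)) (e.symm x) (e.symm y)
    simpa [he] using h
  have hsub : Metric.ball u ρ ⊆ e.symm '' Metric.ball (e u) ρ := by
    intro z hz
    refine ⟨e z, ?_, by simp [he]⟩
    rw [Metric.mem_ball] at hz ⊢
    calc dist (e z) (e u) ≤ 1 * dist z u :=
          (PiLp.lipschitzWith_ofLp 2 (fun _ : Fin m => ℝ)).dist_le_mul z u
      _ < ρ := by simpa using hz
  have h3 : (μH[(m:ℝ)] : Measure (Fin m → ℝ)) = volume := by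
    have := hausdorffMeasure_pi_real (ι := Fin m)
    simpa [Fintype.card_fin] using this
  calc μH[(m:ℝ)] (Metric.ball u ρ) ≤ μH[(m:ℝ)] (e.symm '' Metric.ball (e u) ρ) :=
        measure_mono hsub
    _ ≤ ((Fintype.card (Fin m) : ℝ≥0) ^ ((1:ℝ≥0∞) / 2).toReal : ℝ≥0) ^ (m:ℝ) *
        μH[(m:ℝ)] (Metric.ball (e u) ρ) :=
        hlipsymm.hausdorffMeasure_image_le (by positivity) _
    _ < ∞ := by
        rw [h3, Real.volume_pi_ball _ hρ]
        exact ENNReal.mul_lt_top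
          (ENNReal.rpow_lt_top_of_nonneg (by positivity) ENNReal.coe_ne_top)
          ENNReal.ofReal_lt_top

lemma hausdorff_le_of_antilip {X Y : Type*} [MetricSpace X] [MeasurableSpace X] [BorelSpace X]
    [Nonempty X] [MetricSpace Y] [MeasurableSpace Y] [BorelSpace Y]
    {F : X → Y} {s : Set X} {K : ℝ≥0}
    (hanti : ∀ u ∈ s, ∀ v ∈ s, dist u v ≤ K * dist (F u) (F v)) {d : ℝ} (hd : 0 ≤ d) :
    μH[d] s ≤ (K : ℝ≥0∞) ^ d * μH[d] (F '' s) := by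
  classical
  set G := Function.invFunOn F s with hG
  have hinj : ∀ u ∈ s, ∀ v ∈ s, F u = F v → u = v := by
    intro u hu v hv huv
    have := hanti u hu v hv
    rw [huv, dist_self, mul_zero] at this
    exact dist_le_zero.1 this
  have hGmem : ∀ z ∈ F '' s, G z ∈ s := by
    rintro z ⟨a, ha, rfl⟩
    exact Function.invFunOn_mem ⟨a, ha, rfl⟩
  have hGval : ∀ z ∈ F '' s, F (G z) = z := by
    rintro z ⟨a, ha, rfl⟩
    exact Function.invFunOn_eq ⟨a, ha, rfl⟩
  have hGs : G '' (F '' s) = s := by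
    apply Subset.antisymm
    · rintro _ ⟨z, hz, rfl⟩; exact hGmem z hz
    · intro u hu
      refine ⟨F u, mem_image_of_mem _ hu, ?_⟩
      exact hinj _ (hGmem _ (mem_image_of_mem _ hu)) _ hu (hGval _ (mem_image_of_mem _ hu))
  have hGlip : LipschitzOnWith K G (F '' s) := by
    rw [lipschitzOnWith_iff_dist_le_mul]
    intro z hz w hw
    calc dist (G z) (G w) ≤ K * dist (F (G z)) (F (G w)) :=
          hanti _ (hGmem _ hz) _ (hGmem _ hw)
      _ = K * dist z w := by rw [hGval _ hz, hGval _ hw]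
  calc μH[d] s = μH[d] (G '' (F '' s)) := by rw [hGs]
    _ ≤ (K : ℝ≥0∞) ^ d * μH[d] (F '' s) := hGlip.hausdorffMeasure_image_le hd

lemma local_density (n m : ℕ)
    (M : Type) [TopologicalSpace M] [ChartedSpace (EuclideanSpace ℝ (Fin m)) M]
    [IsManifold (𝓡 m) (⊤ : ℕ∞) M]
    (f : M → EuclideanSpace ℝ (Fin n))
    (hf_smooth : ContMDiff (𝓡 m) 𝓘(ℝ, EuclideanSpace ℝ (Fin n)) (⊤ : ℕ∞) f)
    (hf_imm : ∀ p : M,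
      Function.Injective (mfderiv (𝓡 m) 𝓘(ℝ, EuclideanSpace ℝ (Fin n)) f p))
    (q0 : M) :
    ∃ U ∈ 𝓝 q0, ∃ c r' : ℝ, 0 < c ∧ 0 < r' ∧
      μH[(m:ℝ)] (f '' U) < ∞ ∧
      ∀ q ∈ U, ∀ t : ℝ, 0 < t → t ≤ r' →
        ENNReal.ofReal (c * t ^ m) ≤ μH[(m:ℝ)] (Set.range f ∩ Metric.ball (f q) t) := by
  classical
  set φ := extChartAt (𝓡 m) q0 with hφ
  set c0 := φ q0 with hc0
  set F : EuclideanSpace ℝ (Fin m) → EuclideanSpace ℝ (Fin n) := fun z => f (φ.symm z) with hF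
  -- F is smooth at c0
  have hcd : ContDiffAt ℝ ((⊤:ℕ∞)) F c0 := by
    have h := (hf_smooth q0)
    rw [contMDiffAt_iff] at h
    obtain ⟨-, h⟩ := h
    rw [ModelWithCorners.range_eq_univ, contDiffWithinAt_univ] at h
    simp only [hF, hφ, hc0]
    simpa [chartAt_self_eq, Function.comp_def] using h
  -- identify mfderiv with fderiv of F
  have hmd : MDifferentiableAt (𝓡 m) 𝓘(ℝ, EuclideanSpace ℝ (Fin n)) f q0 :=
    (hf_smooth q0).mdifferentiableAt (by simp)
  set A := fderiv ℝ F c0 with hA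
  have hmfd : mfderiv (𝓡 m) 𝓘(ℝ, EuclideanSpace ℝ (Fin n)) f q0 = A := by
    rw [hmd.mfderiv]
    rw [ModelWithCorners.range_eq_univ, fderivWithin_univ]
    rfl
  have hA_inj : Function.Injective A := hmfd ▸ hf_imm q0
  obtain ⟨K, hK0, hKanti⟩ :=
    LinearMap.exists_antilipschitzWith (A : _ →ₗ[ℝ] _) (LinearMap.ker_eq_bot.2 (by exact hA_inj))
  set k : ℝ := (K : ℝ) with hk
  have hk0 : 0 < k := hK0
  set ε : ℝ := (2 * k)⁻¹ with hε
  have hε0 : 0 < ε := by positivity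
  -- C^1 neighborhood
  obtain ⟨u, hu, hFu⟩ := hcd.contDiffOn (m := 1) (by exact_mod_cast le_top)
    (by intro h; simp at h)
  obtain ⟨v, hvu, hvopen, hc0v⟩ := _root_.mem_nhds_iff.1 hu
  have hF1 : ContDiffOn ℝ 1 F v := hFu.mono hvu
  have hdiff : ∀ z ∈ v, DifferentiableAt ℝ F z := fun z hz =>
    (hF1.differentiableOn one_ne_zero).differentiableAt (hvopen.mem_nhds hz)
  have hfc : ContinuousOn (fderiv ℝ F) v := hF1.continuousOn_fderiv_of_isOpen hvopen le_rfl
  have hcA : ContinuousAt (fderiv ℝ F) c0 := hfc.continuousAt (hvopen.mem_nhds hc0v)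
  have hev : ∀ᶠ z in 𝓝 c0, fderiv ℝ F z ∈ Metric.ball A ε :=
    hcA (Metric.ball_mem_nhds A hε0)
  have htarget : φ.target ∈ 𝓝 c0 :=
    (isOpen_extChartAt_target q0).mem_nhds (PartialEquiv.map_source _ (mem_extChartAt_source q0))
  have hvnhds : v ∈ 𝓝 c0 := hvopen.mem_nhds hc0v
  obtain ⟨r, hr0, hball⟩ := Metric.mem_nhds_iff.1
    (Filter.inter_mem (Filter.inter_mem hev hvnhds) htarget)
  set s := Metric.ball c0 r with hs
  have hsv : s ⊆ v := fun z hz => ((hball hz).1).2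
  have hst : s ⊆ φ.target := fun z hz => (hball hz).2
  have hsd : ∀ z ∈ s, ‖fderiv ℝ F z - A‖ ≤ ε := by
    intro z hz
    have := ((hball hz).1).1
    simp only [Set.mem_setOf_eq, Metric.mem_ball, dist_eq_norm] at this
    exact this.le
  have happrox : ∀ p ∈ s, ∀ q ∈ s, ‖F p - F q - A (p - q)‖ ≤ ε * ‖p - q‖ := by
    intro p hp q hq
    exact (convex_ball c0 r).norm_image_sub_le_of_norm_fderiv_le'
      (fun z hz => hdiff z (hsv hz)) hsd hq hp
  have hlipF : ∀ p ∈ s, ∀ q ∈ s, dist (F p) (F q) ≤ (‖A‖ + ε) * dist p q := by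
    intro p hp q hq
    rw [dist_eq_norm, dist_eq_norm]
    calc ‖F p - F q‖ ≤ ‖F p - F q - A (p - q)‖ + ‖A (p - q)‖ := by
          simpa using norm_add_le (F p - F q - A (p - q)) (A (p - q))
      _ ≤ ε * ‖p - q‖ + ‖A‖ * ‖p - q‖ :=
          add_le_add (happrox p hp q hq) (A.le_opNorm _)
      _ = (‖A‖ + ε) * ‖p - q‖ := by ring
  have hantiF : ∀ p ∈ s, ∀ q ∈ s, dist p q ≤ (2 * k) * dist (F p) (F q) := by
    intro p hp q hq
    rw [dist_eq_norm, dist_eq_norm]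
    have h1 : ‖p - q‖ ≤ k * ‖A (p - q)‖ := by
      have h := hKanti.le_mul_dist p q
      rw [dist_eq_norm, dist_eq_norm] at h
      simpa [← map_sub] using h
    have h2 : ‖A (p - q)‖ ≤ ‖F p - F q‖ + ε * ‖p - q‖ := by
      have := happrox p hp q hq
      have h3 : ‖A (p - q)‖ ≤ ‖A (p - q) - (F p - F q)‖ + ‖F p - F q‖ := by
        simpa using norm_add_le (A (p - q) - (F p - F q)) (F p - F q)
      rw [norm_sub_rev] at h3
      linarith
    have hkε : k * ε = 1 / 2 := by
      rw [hε]; field_simp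
    nlinarith [norm_nonneg (p - q), norm_nonneg (F p - F q)]
  obtain ⟨cE, hcE0, hEball⟩ := euclidean_hausdorff_ball_lower m
  set L : ℝ := ‖A‖ + ε with hL
  have hL0 : 0 < L := by positivity
  set U : Set M := φ.source ∩ φ ⁻¹' (Metric.ball c0 (r/2)) with hU
  have hUnhds : U ∈ 𝓝 q0 := by
    apply Filter.inter_mem (extChartAt_source_mem_nhds q0)
    exact (continuousAt_extChartAt q0).preimage_mem_nhds
      (Metric.ball_mem_nhds c0 (by positivity))
  have hfqF : ∀ q ∈ U, f q = F (φ q) := by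
    intro q hq
    simp only [hF]
    rw [φ.left_inv hq.1]
  have hφqU : ∀ q ∈ U, φ q ∈ Metric.ball c0 (r/2) := fun q hq => hq.2
  have hLip : LipschitzOnWith L.toNNReal F s := by
    rw [lipschitzOnWith_iff_dist_le_mul]
    intro p hp q hq
    rw [Real.coe_toNNReal _ hL0.le]
    exact hlipF p hp q hq
  have h2r : Metric.ball c0 (r/2) ⊆ s := Metric.ball_subset_ball (by linarith)
  have hfin : μH[(m:ℝ)] (f '' U) < ∞ := by
    have himg : f '' U ⊆ F '' s := by
      rintro _ ⟨q, hq, rfl⟩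
      exact ⟨φ q, h2r (hφqU q hq), (hfqF q hq).symm⟩
    calc μH[(m:ℝ)] (f '' U) ≤ μH[(m:ℝ)] (F '' s) := measure_mono himg
      _ ≤ (L.toNNReal : ℝ≥0∞) ^ (m:ℝ) * μH[(m:ℝ)] s :=
          hLip.hausdorffMeasure_image_le (by positivity)
      _ < ∞ := ENNReal.mul_lt_top
          (ENNReal.rpow_lt_top_of_nonneg (by positivity) ENNReal.coe_ne_top)
          (euclidean_hausdorff_ball_finite m c0 r)
  refine ⟨U, hUnhds, cE / (L ^ m * (2*k) ^ m), L * (r/2), by positivity, by positivity, hfin, ?_⟩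
  intro q hq t ht0 htr
  set ρ := t / L with hρ
  have hρ0 : 0 < ρ := by positivity
  have hρr : ρ ≤ r / 2 := by
    rw [hρ, div_le_iff₀ hL0]
    calc t ≤ L * (r/2) := htr
      _ = r/2 * L := by ring
  have hsub2 : Metric.ball (φ q) ρ ⊆ s := by
    intro z hz
    rw [hs, Metric.mem_ball]
    rw [Metric.mem_ball] at hz
    have h5 := hφqU q hq
    rw [Metric.mem_ball] at h5
    calc dist z c0 ≤ dist z (φ q) + dist (φ q) c0 := dist_triangle _ _ _
      _ < ρ + r/2 := add_lt_add hz h5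
      _ ≤ r := by linarith
  have h3 : F '' Metric.ball (φ q) ρ ⊆ Set.range f ∩ Metric.ball (f q) t := by
    rintro _ ⟨z, hz, rfl⟩
    refine ⟨⟨φ.symm z, rfl⟩, ?_⟩
    rw [Metric.mem_ball]
    have hφqs : φ q ∈ s := h2r (hφqU q hq)
    have hzρ : dist z (φ q) < ρ := hz
    calc dist (F z) (f q) = dist (F z) (F (φ q)) := by rw [hfqF q hq]
      _ ≤ L * dist z (φ q) := hlipF _ (hsub2 hz) _ hφqs
      _ < L * ρ := by gcongr
      _ = t := by rw [hρ, mul_comm]; exact div_mul_cancel₀ t hL0.ne'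
  have hanti' : ∀ u' ∈ Metric.ball (φ q) ρ, ∀ v' ∈ Metric.ball (φ q) ρ,
      dist u' v' ≤ ((2*k).toNNReal : ℝ) * dist (F u') (F v') := by
    intro u' hu' v' hv'
    rw [Real.coe_toNNReal _ (by positivity)]
    exact hantiF _ (hsub2 hu') _ (hsub2 hv')
  have hmeas := hausdorff_le_of_antilip hanti' (d := (m:ℝ)) (by positivity)
  have hchain : ENNReal.ofReal (cE * ρ ^ m) ≤
      (((2*k).toNNReal : ℝ≥0∞)) ^ (m:ℝ) * μH[(m:ℝ)] (Set.range f ∩ Metric.ball (f q) t) := by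
    calc ENNReal.ofReal (cE * ρ ^ m) ≤ μH[(m:ℝ)] (Metric.ball (φ q) ρ) := hEball _ _ hρ0
      _ ≤ (((2*k).toNNReal : ℝ≥0∞)) ^ (m:ℝ) * μH[(m:ℝ)] (F '' Metric.ball (φ q) ρ) := hmeas
      _ ≤ _ := by gcongr
  have hD : ((((2*k).toNNReal : ℝ≥0∞)) : ℝ≥0∞) ^ (m:ℝ) = ENNReal.ofReal ((2*k) ^ m) := by
    rw [ENNReal.ofReal_pow (by positivity), ← ENNReal.rpow_natCast]
    rfl
  rw [hD] at hchain
  have hkey : ENNReal.ofReal ((2*k)^m) * ENNReal.ofReal (cE / (L^m * (2*k)^m) * t ^ m)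
      ≤ ENNReal.ofReal ((2*k)^m) * μH[(m:ℝ)] (Set.range f ∩ Metric.ball (f q) t) := by
    rw [← ENNReal.ofReal_mul (by positivity)]
    refine le_trans (ENNReal.ofReal_le_ofReal (le_of_eq ?_)) hchain
    rw [hρ, div_pow]
    have hy : ((2*k):ℝ)^m ≠ 0 := by positivity
    calc (2 * k) ^ m * (cE / (L ^ m * (2 * k) ^ m) * t ^ m)
        = cE * t ^ m * (2*k)^m / (L ^ m * (2 * k) ^ m) := by ring
      _ = cE * t ^ m / L ^ m := mul_div_mul_right _ _ hy
      _ = cE * (t ^ m / L ^ m) := by ring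
  exact (ENNReal.mul_le_mul_iff_right
    (ENNReal.ofReal_pos.2 (by positivity)).ne' ENNReal.ofReal_ne_top).1 hkey


/-- The Riesz-type integral over `S` blows up as the point approaches `S`; in
particular the conformal factor `u_ε` tends to infinity at `S`. -/
theorem integral_blows_up_near_S
    (n m : ℕ) (hn : 3 ≤ n)
    (M : Type) [TopologicalSpace M] [ChartedSpace (EuclideanSpace ℝ (Fin m)) M]
    [IsManifold (𝓡 m) (⊤ : ℕ∞) M] [CompactSpace M]
    (f : M → EuclideanSpace ℝ (Fin n))
    (hf_smooth : ContMDiff (𝓡 m) 𝓘(ℝ, EuclideanSpace ℝ (Fin n)) (⊤ : ℕ∞) f)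
    (hf_emb : Topology.IsEmbedding f)
    (hf_imm : ∀ p : M,
      Function.Injective (mfderiv (𝓡 m) 𝓘(ℝ, EuclideanSpace ℝ (Fin n)) f p))
    (S : Set (EuclideanSpace ℝ (Fin n))) (hS : S = Set.range f)
    (hcodim : m + 3 ≤ n) (hSne : S.Nonempty) :
    ∀ Mbig : ℝ, 0 < Mbig → ∃ d > (0:ℝ),
      ∀ x : EuclideanSpace ℝ (Fin n), x ∉ S → Metric.infDist x S < d →
        Mbig < ∫ y in S, ‖x - y‖ ^ (-((n:ℝ) - 2)) ∂μH[(m:ℝ)] := by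
  intro Mbig hMbig
  have hfc : Continuous f := hf_emb.continuous
  have hScomp : IsCompact S := hS ▸ isCompact_range hfc
  have hSclosed : IsClosed S := hScomp.isClosed
  have hSmeas : MeasurableSet S := hSclosed.measurableSet
  choose U hU c r hc hr hfin hlow using local_density n m M f hf_smooth hf_imm
  obtain ⟨T, -, hT⟩ := isCompact_univ.elim_nhds_subcover U (fun q _ => hU q)
  have hTne : T.Nonempty := by
    rcases hSne with ⟨p0, hp0⟩
    rw [hS] at hp0; obtain ⟨q0, rfl⟩ := hp0
    by_contra h
    rw [Finset.not_nonempty_iff_eq_empty] at h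
    have := hT (Set.mem_univ q0)
    simp [h] at this
  set c0 : ℝ := T.inf' hTne c with hc0
  set r0 : ℝ := T.inf' hTne r with hr0
  have hc00 : 0 < c0 := by
    rw [hc0, Finset.lt_inf'_iff]
    exact fun q _ => hc q
  have hr00 : 0 < r0 := by
    rw [hr0, Finset.lt_inf'_iff]
    exact fun q _ => hr q
  have hSfin : μH[(m:ℝ)] S < ∞ := by
    have hsub : S ⊆ ⋃ q ∈ T, f '' U q := by
      rw [hS]
      rintro _ ⟨q, rfl⟩
      have h1 := hT (Set.mem_univ q)
      rw [Set.mem_iUnion₂] at h1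
      obtain ⟨i, hi, hqi⟩ := h1
      exact Set.mem_iUnion₂.2 ⟨i, hi, Set.mem_image_of_mem f hqi⟩
    calc μH[(m:ℝ)] S ≤ ∑ q ∈ T, μH[(m:ℝ)] (f '' U q) :=
          (measure_mono hsub).trans (measure_biUnion_finset_le _ _)
      _ < ∞ := ENNReal.sum_lt_top.2 fun q _ => hfin q
  have hlower : ∀ p ∈ S, ∀ t : ℝ, 0 < t → t ≤ r0 →
      ENNReal.ofReal (c0 * t ^ m) ≤ μH[(m:ℝ)] (S ∩ Metric.ball p t) := by
    intro p hp t ht htr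
    rw [hS] at hp
    obtain ⟨q, rfl⟩ := hp
    have h1 := hT (Set.mem_univ q)
    rw [Set.mem_iUnion₂] at h1
    obtain ⟨i, hiT, hqU⟩ := h1
    rw [hS]
    refine le_trans ?_ (hlow i q hqU t ht (htr.trans (Finset.inf'_le _ hiT)))
    apply ENNReal.ofReal_le_ofReal
    have h2 : c0 ≤ c i := Finset.inf'_le _ hiT
    have h3 : (0:ℝ) ≤ t ^ m := by positivity
    nlinarith
  set e : ℝ := (n:ℝ) - 2 with he
  have he1 : 1 ≤ e := by
    rw [he]
    have : (3:ℝ) ≤ (n:ℝ) := by exact_mod_cast hn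
    linarith
  set c2 : ℝ := c0 * (2:ℝ) ^ (-e) with hc2
  have h2e : (0:ℝ) < (2:ℝ) ^ (-e) := Real.rpow_pos_of_pos (by norm_num) _
  have hc20 : 0 < c2 := mul_pos hc00 h2e
  refine ⟨min 1 (min r0 (c2 / Mbig)), by positivity, ?_⟩
  intro x hxS hxd
  set δ := Metric.infDist x S with hδ
  have hδ0 : 0 < δ := (hSclosed.notMem_iff_infDist_pos hSne).1 hxS
  have hδ1 : δ ≤ 1 := le_of_lt (lt_of_lt_of_le hxd (min_le_left _ _))
  have hδr0 : δ ≤ r0 :=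
    le_of_lt (lt_of_lt_of_le hxd ((min_le_right _ _).trans (min_le_left _ _)))
  have hδM : δ < c2 / Mbig :=
    lt_of_lt_of_le hxd ((min_le_right _ _).trans (min_le_right _ _))
  obtain ⟨p, hpS, hpd⟩ := hScomp.exists_infDist_eq_dist hSne x
  set g : EuclideanSpace ℝ (Fin n) → ℝ := fun y => ‖x - y‖ ^ (-e) with hg
  have hgS : ∀ y ∈ S, δ ≤ ‖x - y‖ := by
    intro y hy
    rw [hδ, ← dist_eq_norm]
    exact Metric.infDist_le_dist_of_mem hy
  have hg_nonneg : ∀ y, 0 ≤ g y := fun y => Real.rpow_nonneg (norm_nonneg _) _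
  have hg_cont : ContinuousOn g S := by
    intro y hy
    have h1 : ‖x - y‖ ≠ 0 := (lt_of_lt_of_le hδ0 (hgS y hy)).ne'
    have hb : Continuous fun y : EuclideanSpace ℝ (Fin n) => ‖x - y‖ :=
      (continuous_const.sub continuous_id).norm
    exact (hb.continuousAt.rpow_const (Or.inl h1)).continuousWithinAt
  haveI : IsFiniteMeasure ((μH[(m:ℝ)] :
      Measure (EuclideanSpace ℝ (Fin n))).restrict S) :=
    ⟨by rw [Measure.restrict_apply_univ]; exact hSfin⟩
  have hg_int : IntegrableOn g S μH[(m:ℝ)] := by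
    refine Integrable.mono' (integrable_const (δ ^ (-e)))
      (hg_cont.aestronglyMeasurable hSmeas) ?_
    refine (ae_restrict_iff' hSmeas).2 (Filter.Eventually.of_forall fun y hy => ?_)
    rw [Real.norm_eq_abs, abs_of_nonneg (hg_nonneg y)]
    exact Real.rpow_le_rpow_of_nonpos hδ0 (hgS y hy) (by linarith)
  set B := S ∩ Metric.ball p δ with hB
  have hBmeas : MeasurableSet B := hSmeas.inter measurableSet_ball
  have hBfin : μH[(m:ℝ)] B ≠ ∞ :=
    (lt_of_le_of_lt (measure_mono Set.inter_subset_left) hSfin).ne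
  have hglb : ∀ y ∈ B, (2*δ) ^ (-e) ≤ g y := by
    intro y hy
    have h1 : 0 < ‖x - y‖ := lt_of_lt_of_le hδ0 (hgS y hy.1)
    have h2 : ‖x - y‖ ≤ 2 * δ := by
      rw [← dist_eq_norm]
      have hy2 : dist p y < δ := by
        have h6 := hy.2
        rwa [Metric.mem_ball, dist_comm] at h6
      calc dist x y ≤ dist x p + dist p y := dist_triangle _ _ _
        _ ≤ δ + δ := add_le_add (le_of_eq hpd.symm) hy2.le
        _ = 2 * δ := by ring
    exact Real.rpow_le_rpow_of_nonpos h1 h2 (by linarith)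
  have hμB : c0 * δ ^ m ≤ (μH[(m:ℝ)] B).toReal := by
    have h1 := hlower p hpS δ hδ0 hδr0
    have h2 := ENNReal.toReal_mono hBfin h1
    rwa [ENNReal.toReal_ofReal (by positivity)] at h2
  have hint1 : (2*δ) ^ (-e) * (μH[(m:ℝ)] B).toReal ≤ ∫ y in B, g y ∂μH[(m:ℝ)] :=
    by have := setIntegral_ge_of_const_le hBmeas hBfin hglb (hg_int.mono_set Set.inter_subset_left)
       rw [smul_eq_mul, mul_comm] at this; exact this
  have hint2 : (∫ y in B, g y ∂μH[(m:ℝ)]) ≤ ∫ y in S, g y ∂μH[(m:ℝ)] :=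
    setIntegral_mono_set hg_int (Filter.Eventually.of_forall fun y => hg_nonneg y)
      (HasSubset.Subset.eventuallyLE Set.inter_subset_left)
  -- numeric chain
  have hnum : Mbig < (2*δ) ^ (-e) * (c0 * δ ^ m) := by
    have hδme : δ ^ ((m:ℝ) - e) = δ ^ (m:ℕ) * δ ^ (-e) := by
      rw [sub_eq_add_neg, Real.rpow_add hδ0, Real.rpow_natCast]
    have hrw : (2*δ) ^ (-e) * (c0 * δ ^ m) = c2 * δ ^ ((m:ℝ) - e) := by
      rw [Real.mul_rpow (by norm_num) hδ0.le, hc2, hδme]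
      ring
    have h4 : δ⁻¹ ≤ δ ^ ((m:ℝ) - e) := by
      rw [← Real.rpow_neg_one δ]
      apply Real.rpow_le_rpow_of_exponent_ge hδ0 hδ1
      have hmn : (m:ℝ) + 3 ≤ (n:ℝ) := by exact_mod_cast hcodim
      rw [he]; linarith
    have h5 : Mbig < c2 * δ⁻¹ := by
      have h6 : δ * Mbig < c2 := (lt_div_iff₀ hMbig).1 hδM
      have h7 : Mbig < c2 / δ := (lt_div_iff₀ hδ0).2 (by nlinarith)
      rwa [div_eq_mul_inv] at h7
    rw [hrw]
    exact h5.trans_le (mul_le_mul_of_nonneg_left h4 hc20.le)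
  calc Mbig < (2*δ) ^ (-e) * (c0 * δ ^ m) := hnum
    _ ≤ (2*δ) ^ (-e) * (μH[(m:ℝ)] B).toReal :=
        mul_le_mul_of_nonneg_left hμB (Real.rpow_nonneg (by positivity) _)
    _ ≤ ∫ y in B, g y ∂μH[(m:ℝ)] := hint1
    _ ≤ ∫ y in S, g y ∂μH[(m:ℝ)] := hint2
end
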